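/- For each k ∈ {1,…,d}, the dual of the k-support norm is the ℓ2-norm of the k largest components in absolute value: ‖u‖_{*,(k)} = sqrt(Σ_{i=1}^k (|u|↓_i)²), where |u|↓ is u reordered nonincreasingly in absolute value. -/

import Mathlib

noncomputable def ksupNorm (d k : ℕ) (w : Fin d → ℝ) : ℝ :=
  gauge (convexHull ℝ
    {v : Fin d → ℝ | {i | v i ≠ 0}.ncard ≤ k ∧ Real.sqrt (∑ i, v i ^ 2) ≤ 1}) w

lemma ksup_strictMono_val_le {m d : ℕ} {g : Fin m → Fin d} (hg : StrictMono g) (i : Fin m) :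
    (i : ℕ) ≤ (g i : ℕ) := by
  suffices h : ∀ n : ℕ, ∀ i : Fin m, (i : ℕ) = n → n ≤ (g i : ℕ) from h _ i rfl
  intro n
  induction n with
  | zero => omega
  | succ p ih =>
    intro i hi
    have hp : p < m := by omega
    have h1 := ih ⟨p, hp⟩ rfl
    have h2 : g ⟨p, hp⟩ < g i := hg (by simp only [Fin.lt_def]; omega)
    simp only [Fin.lt_def] at h2
    omega

lemma ksup_sum_topk {d k : ℕ} (hkd : k ≤ d) (g : ℕ → ℝ)
    (hg0 : ∀ n, 0 ≤ g n)
    (hmono : ∀ a b : ℕ, a ≤ b → b < d → g b ≤ g a)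
    (s : Finset (Fin d)) (hs : s.card ≤ k) :
    ∑ j ∈ s, g j.val ≤ ∑ n ∈ Finset.range k, g n := by
  set m := s.card with hm
  let e := s.orderEmbOfFin hm.symm
  have himg : Finset.image (fun i => e i) Finset.univ = s := by
    apply Finset.coe_injective
    rw [Finset.coe_image, Finset.coe_univ, Set.image_univ]
    exact Finset.range_orderEmbOfFin s hm.symm
  calc ∑ j ∈ s, g j.val = ∑ i : Fin m, g (e i).val := by
        rw [← himg, Finset.sum_image (fun x _ y _ h => e.injective h)]
    _ ≤ ∑ i : Fin m, g i.val := by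
        refine Finset.sum_le_sum fun i _ => ?_
        exact hmono i.val (e i).val (ksup_strictMono_val_le e.strictMono i) (e i).isLt
    _ = ∑ n ∈ Finset.range m, g n := Fin.sum_univ_eq_sum_range _ m
    _ ≤ ∑ n ∈ Finset.range k, g n :=
        Finset.sum_le_sum_of_subset_of_nonneg (Finset.range_subset_range.2 hs) fun n _ _ => hg0 n

theorem ksup_dual_norm {d k : ℕ} (hk1 : 1 ≤ k) (hkd : k ≤ d) (u : Fin d → ℝ)
    (σ : Equiv.Perm (Fin d)) (hσ : Antitone fun i => |u (σ i)|) :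
    sSup {x : ℝ | ∃ w : Fin d → ℝ, ksupNorm d k w ≤ 1 ∧ x = ∑ i, u i * w i} =
      Real.sqrt (∑ i ∈ Finset.range k, (if h : i < d then |u (σ ⟨i, h⟩)| else 0) ^ 2) := by
  classical
  have hd : 1 ≤ d := hk1.trans hkd
  set S : Set (Fin d → ℝ) :=
    {v : Fin d → ℝ | {i | v i ≠ 0}.ncard ≤ k ∧ Real.sqrt (∑ i, v i ^ 2) ≤ 1} with hS
  set C : Set (Fin d → ℝ) := convexHull ℝ S with hC
  have hknorm : ∀ w : Fin d → ℝ, ksupNorm d k w = gauge C w := by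
    intro w; rw [hC, hS]; rfl
  -- the decreasing squares sequence
  set g : ℕ → ℝ := fun n => if h : n < d then (u (σ ⟨n, h⟩)) ^ 2 else 0 with hg
  have hg0 : ∀ n, 0 ≤ g n := by
    intro n; simp only [hg]; split <;> positivity
  have hgmono : ∀ a b : ℕ, a ≤ b → b < d → g b ≤ g a := by
    intro a b hab hbd
    have had : a < d := lt_of_le_of_lt hab hbd
    simp only [hg, dif_pos hbd, dif_pos had]
    have h := hσ (show (⟨a, had⟩ : Fin d) ≤ ⟨b, hbd⟩ from by simp [Fin.le_def, hab])
    calc u (σ ⟨b, hbd⟩) ^ 2 = |u (σ ⟨b, hbd⟩)| ^ 2 := (sq_abs _).symm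
      _ ≤ |u (σ ⟨a, had⟩)| ^ 2 := by
          exact pow_le_pow_left₀ (abs_nonneg _) h 2
      _ = u (σ ⟨a, had⟩) ^ 2 := sq_abs _
  set Q : ℝ := ∑ n ∈ Finset.range k, g n with hQ
  have hQ0 : 0 ≤ Q := Finset.sum_nonneg fun n _ => hg0 n
  set M : ℝ := Real.sqrt Q with hM
  have hM0 : 0 ≤ M := Real.sqrt_nonneg _
  have hMsq : M ^ 2 = Q := Real.sq_sqrt hQ0
  have hRHS : Real.sqrt (∑ i ∈ Finset.range k,
      (if h : i < d then |u (σ ⟨i, h⟩)| else 0) ^ 2) = M := by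
    rw [hM, hQ]
    congr 1
    refine Finset.sum_congr rfl fun n hn => ?_
    have hnd : n < d := lt_of_lt_of_le (Finset.mem_range.1 hn) hkd
    simp [hg, dif_pos hnd, sq_abs]
  rw [hRHS]
  -- bound on S
  have hSbound : ∀ v ∈ S, ∑ i, u i * v i ≤ M := by
    intro v hv
    obtain ⟨hcard, hnorm⟩ := hv
    set t : Finset (Fin d) := Finset.univ.filter (fun i => v i ≠ 0) with ht
    have htcard : t.card ≤ k := by
      have he : {i | v i ≠ 0}.ncard = t.card := by
        rw [← Set.ncard_coe_finset]
        congr 1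
        ext i; simp [ht]
      omega
    have hsum : ∑ i, u i * v i = ∑ i ∈ t, u i * v i := by
      rw [ht]
      rw [Finset.sum_filter_of_ne]
      intro x _ hx hvx
      exact hx (by rw [hvx, mul_zero])
    have hv2 : ∑ i ∈ t, v i ^ 2 ≤ 1 := by
      have h1 : ∑ i ∈ t, v i ^ 2 ≤ ∑ i, v i ^ 2 :=
        Finset.sum_le_sum_of_subset_of_nonneg (Finset.subset_univ t) fun i _ _ => sq_nonneg _
      have hnn : 0 ≤ ∑ i, v i ^ 2 := Finset.sum_nonneg fun i _ => sq_nonneg _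
      nlinarith [Real.sq_sqrt hnn, Real.sqrt_nonneg (∑ i, v i ^ 2)]
    have hu2 : ∑ i ∈ t, u i ^ 2 ≤ Q := by
      have himg : ∑ j ∈ t.image σ.symm, g j.val = ∑ i ∈ t, g (σ.symm i).val :=
        Finset.sum_image fun x _ y _ h => σ.symm.injective h
      have hterm : ∀ i : Fin d, g (σ.symm i).val = u i ^ 2 := by
        intro i
        simp [hg, (σ.symm i).isLt]
      have hcard2 : (t.image σ.symm).card ≤ k := by
        rw [Finset.card_image_of_injective _ σ.symm.injective]; exact htcard
      calc ∑ i ∈ t, u i ^ 2 = ∑ i ∈ t, g (σ.symm i).val :=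
            Finset.sum_congr rfl fun i _ => (hterm i).symm
        _ = ∑ j ∈ t.image σ.symm, g j.val := himg.symm
        _ ≤ ∑ n ∈ Finset.range k, g n := ksup_sum_topk hkd g hg0 hgmono _ hcard2
    have hCS : (∑ i ∈ t, u i * v i) ^ 2 ≤ Q := by
      calc (∑ i ∈ t, u i * v i) ^ 2 ≤ (∑ i ∈ t, u i ^ 2) * ∑ i ∈ t, v i ^ 2 :=
            Finset.sum_mul_sq_le_sq_mul_sq t u v
        _ ≤ Q * 1 := by
            refine mul_le_mul hu2 hv2 (Finset.sum_nonneg fun i _ => sq_nonneg _) hQ0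
        _ = Q := mul_one Q
    calc ∑ i, u i * v i = ∑ i ∈ t, u i * v i := hsum
      _ ≤ |∑ i ∈ t, u i * v i| := le_abs_self _
      _ = Real.sqrt ((∑ i ∈ t, u i * v i) ^ 2) := (Real.sqrt_sq_eq_abs _).symm
      _ ≤ Real.sqrt Q := Real.sqrt_le_sqrt hCS
  -- bound on C
  have hCbound : ∀ v ∈ C, ∑ i, u i * v i ≤ M := by
    have hlin : IsLinearMap ℝ (fun v : Fin d → ℝ => ∑ i, u i * v i) := by
      constructor
      · intro x y; simp [mul_add, Finset.sum_add_distrib]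
      · intro c x
        simp only [Pi.smul_apply, smul_eq_mul, Finset.mul_sum]
        exact Finset.sum_congr rfl fun i _ => by ring
    have hconv : Convex ℝ {v : Fin d → ℝ | ∑ i, u i * v i ≤ M} := convex_halfSpace_le hlin M
    intro v hv
    exact convexHull_min hSbound hconv hv
  -- small vectors are in C
  have hd0 : (0 : ℝ) < d := by exact_mod_cast hd
  have hsmall : ∀ v : Fin d → ℝ, (∀ i, |v i| ≤ 1 / d) → v ∈ C := by
    intro v hvi
    have hv' : v = Finset.univ.centerMass (fun _ : Fin d => (1 : ℝ))
        (fun i => Pi.single i ((d : ℝ) * v i)) := by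
      rw [Finset.centerMass]
      simp only [smul_eq_mul, one_smul, Finset.sum_const, Finset.card_univ, Fintype.card_fin,
        nsmul_eq_mul, mul_one]
      rw [Finset.univ_sum_single (fun i => (d : ℝ) * v i)]
      ext j
      simp only [Pi.smul_apply, smul_eq_mul]
      field_simp
    rw [hv', hC]
    refine Finset.centerMass_mem_convexHull _ (fun i _ => zero_le_one)
      (by simp [Finset.card_univ]; positivity) fun i _ => ?_
    rw [hS]
    constructor
    · have hsub : {j | (Pi.single i ((d : ℝ) * v i) : Fin d → ℝ) j ≠ 0} ⊆ {i} := by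
        intro j hj
        simp only [Set.mem_setOf_eq] at hj
        by_contra h
        simp only [Set.mem_singleton_iff] at h
        exact hj (Pi.single_eq_of_ne (M := fun _ : Fin d => ℝ) h ((d : ℝ) * v i))
      calc Set.ncard {j | (Pi.single i ((d : ℝ) * v i) : Fin d → ℝ) j ≠ 0}
          ≤ ({i} : Set (Fin d)).ncard := Set.ncard_le_ncard hsub (Set.finite_singleton i)
        _ = 1 := Set.ncard_singleton i
        _ ≤ k := hk1
    · have hsq : ∑ j, ((Pi.single i ((d : ℝ) * v i) : Fin d → ℝ) j) ^ 2 = ((d : ℝ) * v i) ^ 2 := by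
        rw [Finset.sum_eq_single i]
        · simp
        · intro b _ hb; rw [Pi.single_eq_of_ne hb]; ring
        · intro h; exact absurd (Finset.mem_univ i) h
      rw [hsq, Real.sqrt_sq_eq_abs, abs_mul, abs_of_pos hd0]
      have := hvi i
      calc (d : ℝ) * |v i| ≤ (d : ℝ) * (1 / d) := by
            exact mul_le_mul_of_nonneg_left this hd0.le
        _ = 1 := by field_simp
  have habs : Absorbent ℝ C := by
    apply absorbent_nhds_zero
    have hsub : Metric.ball (0 : Fin d → ℝ) (1 / d) ⊆ C := by
      intro v hvb
      apply hsmall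
      intro i
      have h1 : dist (v i) ((0 : Fin d → ℝ) i) ≤ dist v 0 := dist_le_pi_dist v 0 i
      rw [Metric.mem_ball] at hvb
      have h2 : dist (v i) 0 = |v i| := by simp [Real.dist_eq]
      simp only [Pi.zero_apply] at h1
      rw [h2] at h1
      linarith
    exact Filter.mem_of_superset (Metric.ball_mem_nhds 0 (by positivity)) hsub
  -- upper bound
  have hub : ∀ x ∈ {x : ℝ | ∃ w : Fin d → ℝ, ksupNorm d k w ≤ 1 ∧ x = ∑ i, u i * w i},
      x ≤ M := by
    rintro x ⟨w, hw1, rfl⟩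
    rw [hknorm] at hw1
    refine le_of_forall_pos_le_add fun ε hε => ?_
    set δ : ℝ := ε / (M + 1) with hδ
    have hδ0 : 0 < δ := by positivity
    have hδM : δ * (M + 1) = ε := by rw [hδ]; field_simp
    have h1 : gauge C w < 1 + δ := by linarith
    obtain ⟨b, hb0, hb, hmem⟩ := exists_lt_of_gauge_lt habs h1
    obtain ⟨v, hvC, rfl⟩ := Set.mem_smul_set.1 hmem
    have h2 : ∑ i, u i * (b • v) i = b * ∑ i, u i * v i := by
      rw [Finset.mul_sum]
      exact Finset.sum_congr rfl fun i _ => by simp; ring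
    have h3 := hCbound v hvC
    rw [h2]
    have h4 : b * ∑ i, u i * v i ≤ b * M := mul_le_mul_of_nonneg_left h3 hb0.le
    have h5 : b * M ≤ (1 + δ) * M := mul_le_mul_of_nonneg_right hb.le hM0
    nlinarith
  -- M is attained
  have hmem : M ∈ {x : ℝ | ∃ w : Fin d → ℝ, ksupNorm d k w ≤ 1 ∧ x = ∑ i, u i * w i} := by
    by_cases hQpos : 0 < Q
    · have hMpos : 0 < M := Real.sqrt_pos.2 hQpos
      set F : Finset (Fin d) :=
        Finset.image (fun i : Fin k => σ (Fin.castLE hkd i)) Finset.univ with hF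
      have hinj : Function.Injective (fun i : Fin k => σ (Fin.castLE hkd i)) := by
        intro a b h
        have := σ.injective h
        exact Fin.castLE_injective hkd this
      have hFcard : F.card = k := by
        rw [hF, Finset.card_image_of_injective _ hinj, Finset.card_univ, Fintype.card_fin]
      have hFsum : ∑ j ∈ F, u j ^ 2 = Q := by
        rw [hF, Finset.sum_image fun x _ y _ h => hinj h]
        have : ∀ i : Fin k, u (σ (Fin.castLE hkd i)) ^ 2 = g i.val := by
          intro i
          have hik : (i : ℕ) < d := lt_of_lt_of_le i.isLt hkd
          simp only [hg, dif_pos hik]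
          rfl
        rw [Finset.sum_congr rfl fun i _ => this i]
        rw [hQ]
        exact Fin.sum_univ_eq_sum_range (fun n => g n) k
      obtain ⟨w, hwF, hwnF⟩ : ∃ w : Fin d → ℝ,
          (∀ j ∈ F, w j = u j / M) ∧ (∀ j ∉ F, w j = 0) :=
        ⟨fun j => if j ∈ F then u j / M else 0, fun j hj => if_pos hj, fun j hj => if_neg hj⟩
      have hwS : w ∈ S := by
        rw [hS]
        constructor
        · have hsub : {j | w j ≠ 0} ⊆ (F : Set (Fin d)) := by
            intro j hj
            by_contra h
            exact hj (hwnF j (by simpa using h))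
          calc {j | w j ≠ 0}.ncard ≤ (F : Set (Fin d)).ncard :=
                Set.ncard_le_ncard hsub (Set.toFinite _)
            _ = F.card := Set.ncard_coe_finset F
            _ = k := hFcard
        · have hsq : ∑ j, w j ^ 2 = 1 := by
            have h1 : ∀ j, w j ^ 2 = if j ∈ F then (u j / M) ^ 2 else 0 := by
              intro j
              by_cases hjF : j ∈ F
              · rw [if_pos hjF, hwF j hjF]
              · rw [if_neg hjF, hwnF j hjF]; ring
            rw [Finset.sum_congr rfl fun j _ => h1 j, Finset.sum_ite_mem,
              Finset.univ_inter]
            have : ∑ j ∈ F, (u j / M) ^ 2 = (∑ j ∈ F, u j ^ 2) / M ^ 2 := by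
              rw [Finset.sum_div]
              exact Finset.sum_congr rfl fun j _ => by ring
            rw [this, hFsum, hMsq]
            field_simp
          rw [hsq, Real.sqrt_one]
      refine ⟨w, ?_, ?_⟩
      · rw [hknorm]
        exact gauge_le_one_of_mem (subset_convexHull ℝ S hwS)
      · have h1 : ∀ j, u j * w j = if j ∈ F then u j ^ 2 / M else 0 := by
          intro j
          by_cases hjF : j ∈ F
          · rw [if_pos hjF, hwF j hjF]; ring
          · rw [if_neg hjF, hwnF j hjF]; ring
        rw [Finset.sum_congr rfl fun j _ => h1 j, Finset.sum_ite_mem, Finset.univ_inter]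
        rw [← Finset.sum_div, hFsum]
        rw [eq_div_iff hMpos.ne']
        nlinarith
    · have hQ0' : Q = 0 := le_antisymm (not_lt.1 hQpos) hQ0
      have hM0' : M = 0 := by rw [hM, hQ0', Real.sqrt_zero]
      refine ⟨0, ?_, by simp [hM0']⟩
      rw [hknorm, gauge_zero]
      exact zero_le_one
  exact le_antisymm (csSup_le ⟨M, hmem⟩ hub) (le_csSup ⟨M, hub⟩ hmem)
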